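/- Let M be a dominating r-uniform hypergraph and M' a sub-hypergraph of M. Then for every n-vertex r-graph H with hom(M − V(M'), H) > 0, one has hom(M,H) / hom(M − V(M'), H) ≥ t_{K_r^{(r)}}(H)^{d_M(V(M'))} · n^{v(M')}. -/

import Mathlib

open Finset

/-- An `r`-uniform hypergraph on vertex type `V`: a set of edges, each an `r`-element
subset of `V`. -/
structure HGraph (r : ℕ) (V : Type) where
  edges : Finset (Finset V)
  uniform : ∀ e ∈ edges, e.card = r

variable {r : ℕ} {α β γ : Type}

/-- The set of homomorphisms from `F` to `H`: maps sending every edge of `F` to an edge of `H`. -/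
def homFinset [Fintype α] [DecidableEq α] [Fintype β] [DecidableEq β]
    (F : HGraph r α) (H : HGraph r β) : Finset (α → β) :=
  Finset.univ.filter fun φ => ∀ e ∈ F.edges, e.image φ ∈ H.edges

/-- The number of homomorphisms from `F` to `H`. -/
def homCount [Fintype α] [DecidableEq α] [Fintype β] [DecidableEq β]
    (F : HGraph r α) (H : HGraph r β) : ℕ :=
  (homFinset F H).card

/-- The homomorphism density `t_F(H) = hom(F,H) / v(H)^{v(F)}`. -/
noncomputable def homDensity [Fintype α] [DecidableEq α] [Fintype β] [DecidableEq β]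
    (F : HGraph r α) (H : HGraph r β) : ℝ :=
  (homCount F H : ℝ) / (Fintype.card β : ℝ) ^ (Fintype.card α)

/-- `K_r^{(r)}`: the `r`-graph consisting of a single edge on `r` vertices. -/
def KEdge (r : ℕ) : HGraph r (Fin r) :=
  ⟨{Finset.univ}, by intro e he; rw [Finset.mem_singleton] at he; subst he; simp⟩

/-- Edge density of an `r`-graph, `t_{K_r^{(r)}}(H)`. -/
noncomputable def edgeDensity [Fintype β] [DecidableEq β] (H : HGraph r β) : ℝ :=
  homDensity (KEdge r) H

/-- An `r`-graph `F` is Sidorenko if `t_F(H) ≥ t_{K_r^{(r)}}(H)^{e(F)}` for all `r`-graphs `H`. -/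
def IsSidorenko [Fintype α] [DecidableEq α] (F : HGraph r α) : Prop :=
  ∀ (β : Type) [Fintype β] [DecidableEq β] (H : HGraph r β),
    homDensity F H ≥ edgeDensity H ^ F.edges.card

/-- The Sidorenko exponent
`s(F) = sup {s ≥ 0 : ∃ r-graph H with t_F(H) = t_{K_r^{(r)}}(H)^s > 0}`. -/
noncomputable def sidorenkoExp [Fintype α] [DecidableEq α] (F : HGraph r α) : ℝ :=
  sSup {s : ℝ | 0 ≤ s ∧ ∃ (n : ℕ) (H : HGraph r (Fin n)),
    homDensity F H = edgeDensity H ^ s ∧ 0 < edgeDensity H ^ s}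

/-- `d_M(U)`: the number of edges of `M` containing at least one vertex of `U`. -/
def degNear [DecidableEq α] (M : HGraph r α) (U : Finset α) : ℕ :=
  (M.edges.filter fun e => ∃ v ∈ U, v ∈ e).card

/-- The set of vertices appearing in some edge of a given edge set. -/
def edgeSupport [DecidableEq α] (Es : Finset (Finset α)) : Finset α :=
  Es.biUnion id
/-- `M` is a dominating hypergraph: for every sub-hypergraph `M'` of `M` with at least
one edge (given by a nonempty subset `E'` of the edges of `M`) and every `r`-graph `H`,
`t_M(H)^{1/e(M)} ≥ t_{M'}(H)^{1/e(M')}`. -/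
def IsDominating [Fintype α] [DecidableEq α] (M : HGraph r α) : Prop :=
  ∀ (E' : Finset (Finset α)) (hsub : E' ⊆ M.edges), E'.Nonempty →
    ∀ (β : Type) [Fintype β] [DecidableEq β] (H : HGraph r β),
      homDensity M H ^ ((M.edges.card : ℝ)⁻¹) ≥
        homDensity (⟨E', fun e he => M.uniform e (hsub he)⟩ : HGraph r α) H ^
          ((E'.card : ℝ)⁻¹)

/-- `M − B`: delete the vertices of `B` from `M` (keeping the edges avoiding `B`). -/
def HGraph.delete [DecidableEq α] (M : HGraph r α) (B : Finset α) :
    HGraph r {x : α // x ∉ B} where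
  edges := (M.edges.filter fun e => ∀ v ∈ e, v ∉ B).image (Finset.subtype fun x => x ∉ B)
  uniform := by
    intro e he
    simp only [Finset.mem_image, Finset.mem_filter] at he
    obtain ⟨f, ⟨hf, hfB⟩, rfl⟩ := he
    rw [Finset.card_subtype, Finset.filter_true_of_mem hfB]
    exact M.uniform f hf

section Aux

variable [Fintype α] [DecidableEq α] [Fintype β] [DecidableEq β]

lemma mem_homFinset_iff {F : HGraph r α} {H : HGraph r β} {φ : α → β} :
    φ ∈ homFinset F H ↔ ∀ e ∈ F.edges, e.image φ ∈ H.edges := by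
  simp [homFinset]

lemma aux_subtype_image (B : Finset α) (e : Finset α) (he : ∀ v ∈ e, v ∉ B) (φ : α → β) :
    (e.subtype fun x => x ∉ B).image (fun x => φ x.1) = e.image φ := by
  ext b
  simp only [Finset.mem_image, Finset.mem_subtype]
  constructor
  · rintro ⟨a, ha, rfl⟩; exact ⟨a.1, ha, rfl⟩
  · rintro ⟨v, hv, rfl⟩; exact ⟨⟨v, he v hv⟩, hv, rfl⟩

lemma homCount_noEdges (F : HGraph r α) (hF : F.edges = ∅) (H : HGraph r β) :
    homCount F H = Fintype.card β ^ Fintype.card α := by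
  rw [homCount, homFinset, Finset.filter_true_of_mem, Finset.card_univ, Fintype.card_fun]
  intro φ _ e he
  rw [hF] at he
  exact absurd he (Finset.notMem_empty e)

/-- Splitting off the vertices of `B` for the subgraph of edges avoiding `B`. -/
lemma homCount_avoid (M : HGraph r α) (B : Finset α) (H : HGraph r β)
    (pf : ∀ e ∈ M.edges.filter fun e => ∀ v ∈ e, v ∉ B, e.card = r) :
    homCount (⟨M.edges.filter fun e => ∀ v ∈ e, v ∉ B, pf⟩ : HGraph r α) H
      = homCount (M.delete B) H * Fintype.card β ^ B.card := by
  classical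
  have hcard : (homFinset (⟨M.edges.filter fun e => ∀ v ∈ e, v ∉ B, pf⟩ : HGraph r α) H).card
      = ((homFinset (M.delete B) H) ×ˢ (Finset.univ : Finset ({x : α // x ∈ B} → β))).card := by
    apply Finset.card_nbij'
      (i := fun φ => (fun x => φ x.1, fun x => φ x.1))
      (j := fun ψχ => fun x => if h : x ∈ B then ψχ.2 ⟨x, h⟩ else ψχ.1 ⟨x, h⟩)
    · intro φ hφ
      rw [Finset.mem_coe, mem_homFinset_iff] at hφ
      rw [Finset.mem_coe, Finset.mem_product]
      refine ⟨?_, Finset.mem_univ _⟩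
      rw [mem_homFinset_iff]
      intro e he
      simp only [HGraph.delete, Finset.mem_image, Finset.mem_filter] at he
      obtain ⟨f, ⟨hf, hfB⟩, rfl⟩ := he
      rw [aux_subtype_image B f hfB]
      exact hφ f (by simp only [Finset.mem_filter]; exact ⟨hf, hfB⟩)
    · intro ψχ hψχ
      rw [Finset.mem_coe, Finset.mem_product, mem_homFinset_iff] at hψχ
      rw [Finset.mem_coe, mem_homFinset_iff]
      intro e he
      simp only [Finset.mem_filter] at he
      have himg : e.image (fun x => if h : x ∈ B then ψχ.2 ⟨x, h⟩ else ψχ.1 ⟨x, h⟩)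
          = (e.subtype fun x => x ∉ B).image ψχ.1 := by
        rw [← aux_subtype_image B e he.2]
        apply Finset.image_congr
        intro x hx
        simp only [dif_neg x.2]
      rw [himg]
      refine hψχ.1 _ ?_
      simp only [HGraph.delete, Finset.mem_image]
      exact ⟨e, by simp only [Finset.mem_filter]; exact he, rfl⟩
    · intro φ _
      funext x
      by_cases h : x ∈ B <;> simp [h]
    · intro ψχ _
      refine Prod.ext ?_ ?_
      · funext x
        simp only [dif_neg x.2]
      · funext x
        simp only [dif_pos x.2]
  rw [homCount, homCount, hcard, Finset.card_product]
  congr 1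
  rw [Finset.card_univ, Fintype.card_fun, Fintype.card_coe]

/-- The single-edge subgraph has the same density as `K_r^{(r)}`. -/
lemma homCount_single (H : HGraph r β) (e₀ : Finset α) (he₀ : e₀.card = r)
    (pf : ∀ e ∈ ({e₀} : Finset (Finset α)), e.card = r) :
    homCount (⟨{e₀}, pf⟩ : HGraph r α) H
      = homCount (KEdge r) H * Fintype.card β ^ (Fintype.card α - r) := by
  classical
  have hι : Fintype.card {x : α // x ∈ e₀} = r := by rw [Fintype.card_coe, he₀]
  let ι : Fin r ≃ {x : α // x ∈ e₀} := (Fintype.equivFinOfCardEq hι).symm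
  have hcard : (homFinset (⟨{e₀}, pf⟩ : HGraph r α) H).card
      = ((homFinset (KEdge r) H) ×ˢ (Finset.univ : Finset ({x : α // x ∉ e₀} → β))).card := by
    apply Finset.card_nbij'
      (i := fun φ => (fun t => φ (ι t).1, fun x => φ x.1))
      (j := fun χρ => fun x => if h : x ∈ e₀ then χρ.1 (ι.symm ⟨x, h⟩) else χρ.2 ⟨x, h⟩)
    · intro φ hφ
      rw [Finset.mem_coe, mem_homFinset_iff] at hφ
      rw [Finset.mem_coe, Finset.mem_product]
      refine ⟨?_, Finset.mem_univ _⟩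
      rw [mem_homFinset_iff]
      intro e he
      simp only [KEdge, Finset.mem_singleton] at he
      subst he
      have : (Finset.univ : Finset (Fin r)).image (fun t => φ (ι t).1) = e₀.image φ := by
        ext b
        simp only [Finset.mem_image, Finset.mem_univ, true_and]
        constructor
        · rintro ⟨t, rfl⟩; exact ⟨(ι t).1, (ι t).2, rfl⟩
        · rintro ⟨v, hv, rfl⟩
          exact ⟨ι.symm ⟨v, hv⟩, by rw [Equiv.apply_symm_apply]⟩
      rw [this]
      exact hφ e₀ (Finset.mem_singleton_self e₀)
    · intro χρ hχρ
      rw [Finset.mem_coe, Finset.mem_product, mem_homFinset_iff] at hχρ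
      rw [Finset.mem_coe, mem_homFinset_iff]
      intro e he
      rw [Finset.mem_singleton] at he
      rw [he]
      have : e₀.image (fun x => if h : x ∈ e₀ then χρ.1 (ι.symm ⟨x, h⟩) else χρ.2 ⟨x, h⟩)
          = (Finset.univ : Finset (Fin r)).image χρ.1 := by
        ext b
        simp only [Finset.mem_image, Finset.mem_univ, true_and]
        constructor
        · rintro ⟨v, hv, rfl⟩
          exact ⟨ι.symm ⟨v, hv⟩, by rw [dif_pos hv]⟩
        · rintro ⟨t, rfl⟩
          refine ⟨(ι t).1, (ι t).2, ?_⟩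
          rw [dif_pos (ι t).2]
          simp only [Subtype.coe_eta, Equiv.symm_apply_apply]
      rw [this]
      exact hχρ.1 Finset.univ (by simp [KEdge])
    · intro φ _
      funext x
      by_cases h : x ∈ e₀
      · simp only [dif_pos h]
        simp only [Equiv.apply_symm_apply]
      · simp only [dif_neg h]
    · intro χρ _
      refine Prod.ext ?_ ?_
      · funext t
        simp only [dif_pos (ι t).2, Subtype.coe_eta, Equiv.symm_apply_apply]
      · funext x
        simp only [dif_neg x.2]
  rw [homCount, homCount, hcard, Finset.card_product]
  congr 1
  rw [Finset.card_univ, Fintype.card_fun, Fintype.card_subtype_compl, Fintype.card_coe, he₀]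

end Aux

section Aux2

variable [Fintype α] [DecidableEq α] [Fintype β] [DecidableEq β]

lemma homDensity_nonneg (F : HGraph r α) (H : HGraph r β) : 0 ≤ homDensity F H :=
  div_nonneg (Nat.cast_nonneg _) (by positivity)

lemma edgeDensity_nonneg (H : HGraph r β) : 0 ≤ edgeDensity H :=
  homDensity_nonneg _ _

lemma homDensity_single (H : HGraph r β) (e₀ : Finset α) (he₀ : e₀.card = r)
    (pf : ∀ e ∈ ({e₀} : Finset (Finset α)), e.card = r)
    (hn : 0 < Fintype.card β) :
    homDensity (⟨{e₀}, pf⟩ : HGraph r α) H = edgeDensity H := by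
  have hrv : r ≤ Fintype.card α := by
    rw [← he₀, ← Finset.card_univ]
    exact Finset.card_le_card (Finset.subset_univ e₀)
  have hnR : (0:ℝ) < (Fintype.card β : ℝ) := by exact_mod_cast hn
  rw [homDensity, homCount_single H e₀ he₀ pf, edgeDensity, homDensity]
  rw [show Fintype.card α = r + (Fintype.card α - r) from (Nat.add_sub_cancel' hrv).symm]
  rw [pow_add]
  push_cast
  rw [Fintype.card_fin, Nat.add_sub_cancel_left]
  rw [mul_div_mul_right _ _ (by positivity : ((Fintype.card β : ℝ) ^ (Fintype.card α - r)) ≠ 0)]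

lemma sidorenko_of_dominating (M : HGraph r α) (hM : IsDominating M) (H : HGraph r β)
    (hMne : M.edges.Nonempty) (hn : 0 < Fintype.card β) :
    edgeDensity H ^ M.edges.card ≤ homDensity M H := by
  obtain ⟨e₀, he₀⟩ := hMne
  have hsub : ({e₀} : Finset (Finset α)) ⊆ M.edges := Finset.singleton_subset_iff.2 he₀
  have hdom := hM {e₀} hsub (Finset.singleton_nonempty e₀) β H
  rw [Finset.card_singleton] at hdom
  simp only [Nat.cast_one, inv_one, Real.rpow_one] at hdom
  rw [homDensity_single H e₀ (M.uniform e₀ he₀) _ hn] at hdom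
  have hE : (0:ℝ) < (M.edges.card : ℝ) := by
    exact_mod_cast Finset.card_pos.2 ⟨e₀, he₀⟩
  have htM : 0 ≤ homDensity M H := homDensity_nonneg M H
  calc edgeDensity H ^ M.edges.card
      = edgeDensity H ^ ((M.edges.card : ℝ)) := (Real.rpow_natCast _ _).symm
    _ ≤ (homDensity M H ^ ((M.edges.card : ℝ)⁻¹)) ^ ((M.edges.card : ℝ)) :=
        Real.rpow_le_rpow (edgeDensity_nonneg H) hdom hE.le
    _ = homDensity M H := by
        rw [← Real.rpow_mul htM, inv_mul_cancel₀ hE.ne', Real.rpow_one]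

lemma key_ineq {a b p : ℝ} {d k e : ℕ} (ha : 0 < a) (hb : 0 < b) (hp : 0 ≤ p)
    (hk : 0 < k) (he : e = d + k)
    (h1 : b ^ ((k : ℝ))⁻¹ ≤ a ^ ((e : ℝ))⁻¹) (h2 : p ^ e ≤ a) :
    p ^ d * b ≤ a := by
  have heN : 0 < e := he ▸ Nat.lt_of_lt_of_le hk (Nat.le_add_left k d)
  have heR : (0:ℝ) < (e : ℝ) := by exact_mod_cast heN
  have hkR : (0:ℝ) < (k : ℝ) := by exact_mod_cast hk
  have hb' : b ≤ a ^ ((k : ℝ) / (e : ℝ)) := by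
    calc b = (b ^ ((k : ℝ))⁻¹) ^ ((k : ℝ)) := by
          rw [← Real.rpow_mul hb.le, inv_mul_cancel₀ hkR.ne', Real.rpow_one]
      _ ≤ (a ^ ((e : ℝ))⁻¹) ^ ((k : ℝ)) :=
          Real.rpow_le_rpow (Real.rpow_nonneg hb.le _) h1 hkR.le
      _ = a ^ ((k : ℝ) / (e : ℝ)) := by
          rw [← Real.rpow_mul ha.le, inv_mul_eq_div]
  have hpd : p ^ d ≤ a ^ ((d : ℝ) / (e : ℝ)) := by
    have hmul : (e : ℝ) * ((d : ℝ) / (e : ℝ)) = (d : ℝ) := by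
      field_simp
    calc p ^ d = (p ^ e) ^ ((d : ℝ) / (e : ℝ)) := by
          rw [← Real.rpow_natCast p e, ← Real.rpow_mul hp, hmul, Real.rpow_natCast]
      _ ≤ a ^ ((d : ℝ) / (e : ℝ)) :=
          Real.rpow_le_rpow (by positivity) h2 (by positivity)
  calc p ^ d * b ≤ a ^ ((d : ℝ) / (e : ℝ)) * a ^ ((k : ℝ) / (e : ℝ)) :=
        mul_le_mul hpd hb' hb.le (Real.rpow_nonneg ha.le _)
    _ = a ^ ((d : ℝ) / (e : ℝ) + (k : ℝ) / (e : ℝ)) := (Real.rpow_add ha _ _).symm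
    _ = a ^ (1 : ℝ) := by
        rw [← add_div]
        congr 1
        rw [he]
        push_cast
        field_simp
    _ = a := Real.rpow_one a

end Aux2

/-- Lemma: if `M` is dominating and `M'` is a sub-hypergraph of `M` with vertex set `B`
and edge set `E'`, then for every `n`-vertex `r`-graph `H`,
`hom(M,H)/hom(M − V(M'),H) ≥ t_{K_r^{(r)}}(H)^{d_M(V(M'))} · n^{v(M')}`. -/
theorem stmt3 {r : ℕ} (hr : 1 ≤ r) {α : Type} [Fintype α] [DecidableEq α]
    (M : HGraph r α) (hM : IsDominating M)
    (B : Finset α) (E' : Finset (Finset α)) (hE' : E' ⊆ M.edges) (hB : ∀ e ∈ E', e ⊆ B)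
    {β : Type} [Fintype β] [DecidableEq β] (H : HGraph r β)
    (hpos : 0 < homCount (M.delete B) H) :
    (homCount M H : ℝ) / (homCount (M.delete B) H : ℝ) ≥
      edgeDensity H ^ degNear M B * (Fintype.card β : ℝ) ^ B.card := by
  have hDnonneg : (0:ℝ) ≤ (homCount M H : ℝ) / (homCount (M.delete B) H : ℝ) :=
    div_nonneg (Nat.cast_nonneg _) (Nat.cast_nonneg _)
  have hp0 : 0 ≤ edgeDensity H := edgeDensity_nonneg H
  by_cases hn : Fintype.card β = 0
  · -- `β` is empty
    obtain ⟨φ, hφ⟩ := Finset.card_pos.mp hpos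
    have hβ : IsEmpty β := Fintype.card_eq_zero_iff.mp hn
    by_cases hB0 : B = ∅
    · have hα : IsEmpty α := ⟨fun x => hβ.elim (φ ⟨x, by simp [hB0]⟩)⟩
      have hα0 : Fintype.card α = 0 := Fintype.card_eq_zero
      have hMe : M.edges = ∅ := by
        rw [Finset.eq_empty_iff_forall_notMem]
        intro e he
        have hcard : e.card = r := M.uniform e he
        have hne : e.Nonempty := by
          rw [← Finset.card_pos, hcard]; exact hr
        obtain ⟨x, _⟩ := hne
        exact hα.elim x
      have hDe : (M.delete B).edges = ∅ := by
        simp [HGraph.delete, hMe]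
      have hαB : IsEmpty {x : α // x ∉ B} := ⟨fun x => hα.elim x.1⟩
      have h1 : homCount M H = 1 := by
        rw [homCount_noEdges M hMe H, hα0, pow_zero]
      have h2 : homCount (M.delete B) H = 1 := by
        rw [homCount_noEdges _ hDe H,
          show Fintype.card {x : α // x ∉ B} = 0 from Fintype.card_eq_zero, pow_zero]
      have hdN : degNear M B = 0 := by
        simp [degNear, hB0]
      rw [h1, h2, hdN, hB0]
      norm_num
    · have hBc : B.card ≠ 0 := by simpa [Finset.card_eq_zero] using hB0
      rw [hn]
      push_cast
      rw [zero_pow hBc, mul_zero]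
      exact hDnonneg
  · have hnpos : 0 < Fintype.card β := Nat.pos_of_ne_zero hn
    have hnR : (0:ℝ) < (Fintype.card β : ℝ) := by exact_mod_cast hnpos
    have hedk : M.edges.card
        = degNear M B + (M.edges.filter fun e => ∀ v ∈ e, v ∉ B).card := by
      rw [degNear,
        ← Finset.card_filter_add_card_filter_not (s := M.edges)
          (p := fun e => ∃ v ∈ B, v ∈ e)]
      congr 1
      refine congrArg Finset.card ?_
      ext e
      simp only [Finset.mem_filter, not_exists, not_and]
      tauto
    have havoid := homCount_avoid M B H
      (fun e he => M.uniform e (Finset.filter_subset _ _ he))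
    by_cases hd0 : degNear M B = 0
    · -- all edges of `M` avoid `B`
      have hall : ∀ e ∈ M.edges, ∀ w ∈ e, w ∉ B := by
        intro e he w hw hwB
        have hmem : e ∈ M.edges.filter fun e => ∃ v ∈ B, v ∈ e :=
          Finset.mem_filter.2 ⟨he, w, hwB, hw⟩
        simp only [degNear, Finset.card_eq_zero] at hd0
        rw [hd0] at hmem
        exact Finset.notMem_empty e hmem
      have hfe : (M.edges.filter fun e => ∀ v ∈ e, v ∉ B) = M.edges :=
        Finset.filter_true_of_mem hall
      have hMM : homCount (⟨M.edges.filter fun e => ∀ v ∈ e, v ∉ B,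
          fun e he => M.uniform e (Finset.filter_subset _ _ he)⟩ : HGraph r α) H
          = homCount M H := by
        simp only [homCount, homFinset, hfe]
      have hDne : (homCount (M.delete B) H : ℝ) ≠ 0 := by
        exact_mod_cast hpos.ne'
      have key : (homCount M H : ℝ)
          = (homCount (M.delete B) H : ℝ) * (Fintype.card β : ℝ) ^ B.card := by
        rw [← hMM]
        exact_mod_cast congrArg Nat.cast havoid
      rw [hd0, pow_zero, one_mul, key, mul_comm, mul_div_assoc, div_self hDne, mul_one]
    · -- at least one edge of `M` meets `B`
      have hMne : M.edges.Nonempty := by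
        have : (M.edges.filter fun e => ∃ v ∈ B, v ∈ e).Nonempty := by
          rw [← Finset.card_pos]
          exact Nat.pos_of_ne_zero hd0
        obtain ⟨e, he⟩ := this
        exact ⟨e, Finset.mem_of_mem_filter e he⟩
      have hsid := sidorenko_of_dominating M hM H hMne hnpos
      by_cases hp : edgeDensity H = 0
      · rw [hp, zero_pow hd0, zero_mul]
        exact hDnonneg
      · have hppos : 0 < edgeDensity H := lt_of_le_of_ne hp0 (Ne.symm hp)
        have htM : 0 < homDensity M H := lt_of_lt_of_le (pow_pos hppos _) hsid
        have hDpos : (0:ℝ) < (homCount (M.delete B) H : ℝ) := by exact_mod_cast hpos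
        rw [ge_iff_le, le_div_iff₀ hDpos]
        have hvpos : (0:ℝ) < (Fintype.card β : ℝ) ^ Fintype.card α := pow_pos hnR _
        by_cases hk0 : (M.edges.filter fun e => ∀ v ∈ e, v ∉ B).card = 0
        · -- no edge of `M` avoids `B`
          have hfe0 : (M.edges.filter fun e => ∀ v ∈ e, v ∉ B) = ∅ :=
            Finset.card_eq_zero.mp hk0
          have hDe : (M.delete B).edges = ∅ := by
            simp only [HGraph.delete]
            rw [Finset.image_eq_empty, Finset.eq_empty_iff_forall_notMem]
            intro e he
            simp only [Finset.mem_filter] at he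
            have hmem : e ∈ M.edges.filter fun e => ∀ v ∈ e, v ∉ B :=
              Finset.mem_filter.2 ⟨he.1, he.2⟩
            rw [hfe0] at hmem
            exact Finset.notMem_empty e hmem
          have hDcount : (homCount (M.delete B) H : ℝ)
              = (Fintype.card β : ℝ) ^ (Fintype.card α - B.card) := by
            rw [homCount_noEdges _ hDe H]
            push_cast
            congr 2
            rw [Fintype.card_subtype_compl, Fintype.card_coe]
          have hBv : B.card ≤ Fintype.card α := by
            rw [← Finset.card_univ]
            exact Finset.card_le_card (Finset.subset_univ B)
          have hde : degNear M B = M.edges.card := by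
            rw [hedk, hk0, Nat.add_zero]
          have hMcount : edgeDensity H ^ M.edges.card
              * (Fintype.card β : ℝ) ^ Fintype.card α ≤ (homCount M H : ℝ) := by
            rw [← le_div_iff₀ hvpos]
            exact hsid
          calc edgeDensity H ^ degNear M B * (Fintype.card β : ℝ) ^ B.card
                * (homCount (M.delete B) H : ℝ)
              = edgeDensity H ^ M.edges.card
                * ((Fintype.card β : ℝ) ^ B.card
                  * (Fintype.card β : ℝ) ^ (Fintype.card α - B.card)) := by
                rw [hDcount, hde]; ring
            _ = edgeDensity H ^ M.edges.card
                * (Fintype.card β : ℝ) ^ Fintype.card α := by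
                rw [← pow_add, Nat.add_sub_cancel' hBv]
            _ ≤ (homCount M H : ℝ) := hMcount
        · -- main case: apply domination to the edges avoiding `B`
          have hkpos : 0 < (M.edges.filter fun e => ∀ v ∈ e, v ∉ B).card :=
            Nat.pos_of_ne_zero hk0
          have hE₀ne : (M.edges.filter fun e => ∀ v ∈ e, v ∉ B).Nonempty :=
            Finset.card_pos.mp hkpos
          have hdom := hM _ (Finset.filter_subset _ _) hE₀ne β H
          have hbden : homDensity (⟨M.edges.filter fun e => ∀ v ∈ e, v ∉ B,
              fun e he => M.uniform e (Finset.filter_subset _ _ he)⟩ : HGraph r α) H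
              = (homCount (M.delete B) H : ℝ) * (Fintype.card β : ℝ) ^ B.card
                / (Fintype.card β : ℝ) ^ Fintype.card α := by
            rw [homDensity, havoid]
            push_cast
            rfl
          have hbpos : 0 < homDensity (⟨M.edges.filter fun e => ∀ v ∈ e, v ∉ B,
              fun e he => M.uniform e (Finset.filter_subset _ _ he)⟩ : HGraph r α) H := by
            rw [hbden]
            positivity
          have hkey := key_ineq htM hbpos hp0 hkpos hedk hdom hsid
          rw [hbden, homDensity] at hkey
          calc edgeDensity H ^ degNear M B * (Fintype.card β : ℝ) ^ B.card
                * (homCount (M.delete B) H : ℝ)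
              = edgeDensity H ^ degNear M B
                * ((homCount (M.delete B) H : ℝ) * (Fintype.card β : ℝ) ^ B.card
                  / (Fintype.card β : ℝ) ^ Fintype.card α)
                * (Fintype.card β : ℝ) ^ Fintype.card α := by
                field_simp
            _ ≤ ((homCount M H : ℝ) / (Fintype.card β : ℝ) ^ Fintype.card α)
                * (Fintype.card β : ℝ) ^ Fintype.card α :=
                mul_le_mul_of_nonneg_right hkey hvpos.le
            _ = (homCount M H : ℝ) := div_mul_cancel₀ _ hvpos.ne'
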